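/- Let (μ_t)_{t∈I} be a family of probability measures on {1,…,r} such that t ↦ μ_t({k}) is differentiable for each k, and let A be an increasing event in {1,…,r}^n depending on finitely many coordinates, with f = 1_A and ν_t = μ_t^{⊗n}. If S_t^* := min_{2≤k≤r} d/dt μ_t({k,…,r}) ≥ 0, then d/dt ν_t(A) ≥ S_t^* · Σ_{j=1}^n ∫ [f(x | x_j = r) − f(x | x_j = 1)] dν_t(x). -/

import Mathlib

set_option maxHeartbeats 1000000

open Finset

/-- Transporting a sum over one fiber of the `j`-th coordinate to another fiber,
for a function invariant under updating the `j`-th coordinate. -/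
lemma russo_fiber_transport {n r : ℕ} (j : Fin n) (G : (Fin n → Fin r) → ℝ)
    (hG : ∀ x k, G (Function.update x j k) = G x) (v w : Fin r) :
    ∑ x ∈ Finset.univ.filter (fun x : Fin n → Fin r => x j = v), G x
      = ∑ x ∈ Finset.univ.filter (fun x : Fin n → Fin r => x j = w), G x := by
  refine Finset.sum_nbij' (fun x => Function.update x j w)
    (fun x => Function.update x j v) ?_ ?_ ?_ ?_ ?_
  · intro x _; simp
  · intro x _; simp
  · intro x hx
    simp only [Finset.mem_filter] at hx
    show Function.update (Function.update x j w) j v = x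
    rw [Function.update_idem, ← hx.2, Function.update_eq_self]
  · intro x hx
    simp only [Finset.mem_filter] at hx
    show Function.update (Function.update x j v) j w = x
    rw [Function.update_idem, ← hx.2, Function.update_eq_self]
  · intro x _; exact (hG x w).symm

/-- Abel-summation lower bound: if `a` sums to zero on `range r`, `b` is nondecreasing,
and all the tail sums `∑_{i ∈ [m, r)} a i` (for `1 ≤ m < r`) are at least `S ≥ 0`, then
`∑ b i * a i ≥ S * (b (r-1) - b 0)`. -/
lemma russo_abel (r : ℕ) (hr : 1 ≤ r) (a b : ℕ → ℝ) (S : ℝ)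
    (ha : ∑ i ∈ Finset.range r, a i = 0)
    (hb : ∀ i, i + 1 < r → b i ≤ b (i + 1))
    (hT : ∀ m, 1 ≤ m → m < r → S ≤ ∑ i ∈ Finset.Ico m r, a i) :
    S * (b (r - 1) - b 0) ≤ ∑ i ∈ Finset.range r, b i * a i := by
  have hby : ∑ i ∈ Finset.range r, b i * a i
      = b (r - 1) * (∑ i ∈ Finset.range r, a i)
        - ∑ i ∈ Finset.range (r - 1), (b (i + 1) - b i) * (∑ j ∈ Finset.range (i + 1), a j) := by
    simpa only [smul_eq_mul] using Finset.sum_range_by_parts b a r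
  have hpart : ∀ i, i < r - 1 →
      (∑ j ∈ Finset.range (i + 1), a j) = - ∑ j ∈ Finset.Ico (i + 1) r, a j := by
    intro i hi
    have h1 : (i + 1) ≤ r := by omega
    have := Finset.sum_Ico_consecutive a (Nat.zero_le (i + 1)) h1
    rw [← Finset.range_eq_Ico] at this
    have h2 : (∑ j ∈ Finset.range (i+1), a j) + ∑ j ∈ Finset.Ico (i+1) r, a j = 0 := by
      rw [this, ← Finset.range_eq_Ico]; exact ha
    linarith
  rw [hby, ha, mul_zero, zero_sub]
  have key : S * (b (r - 1) - b 0)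
      ≤ ∑ i ∈ Finset.range (r - 1), (b (i + 1) - b i) * (∑ j ∈ Finset.Ico (i + 1) r, a j) := by
    have htel : ∑ i ∈ Finset.range (r - 1), (b (i + 1) - b i) = b (r - 1) - b 0 :=
      Finset.sum_range_sub b (r - 1)
    calc S * (b (r - 1) - b 0) = ∑ i ∈ Finset.range (r - 1), S * (b (i + 1) - b i) := by
          rw [← Finset.mul_sum, htel]
      _ ≤ _ := by
          apply Finset.sum_le_sum
          intro i hi
          rw [Finset.mem_range] at hi
          have hd : 0 ≤ b (i + 1) - b i := by
            have := hb i (by omega); linarith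
          have hTS : S ≤ ∑ j ∈ Finset.Ico (i + 1) r, a j := hT (i + 1) (by omega) (by omega)
          calc S * (b (i + 1) - b i) = (b (i + 1) - b i) * S := mul_comm _ _
            _ ≤ (b (i + 1) - b i) * (∑ j ∈ Finset.Ico (i + 1) r, a j) :=
                mul_le_mul_of_nonneg_left hTS hd
  have : ∑ i ∈ Finset.range (r - 1), (b (i + 1) - b i) * (∑ j ∈ Finset.range (i + 1), a j)
      = - ∑ i ∈ Finset.range (r - 1), (b (i + 1) - b i) * (∑ j ∈ Finset.Ico (i + 1) r, a j) := by
    rw [← Finset.sum_neg_distrib]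
    apply Finset.sum_congr rfl
    intro i hi
    rw [Finset.mem_range] at hi
    rw [hpart i hi, mul_neg]
  rw [this, neg_neg]
  exact key

/-- Generalized Russo formula (inequality (2) of the paper) on `{1,…,r}^n` (encoded as
`Fin n → Fin r`): for an increasing event `A` depending on finitely many coordinates,
if each `t ↦ μ_t({k})` is differentiable at `t₀` with derivative `μ'(k)`, the family
`(μ_t)` consists of probability measures, and `S* ≥ 0` is a lower bound for the tail
derivatives `d/dt μ_t({k,…,r}) = ∑_{l≥k} μ'(l)` for `k ≥ 2`, then
`d/dt ν_t(A)|_{t=t₀} ≥ S*·∑_j ∫ (1_A(x|x_j=r) - 1_A(x|x_j=1)) dν_{t₀}(x)`. -/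
theorem generalized_russo_formula
    (n r : ℕ) (hr : 2 ≤ r)
    (μ : ℝ → Fin r → ℝ) (μ' : Fin r → ℝ) (t₀ : ℝ)
    (hpos : ∀ t k, 0 ≤ μ t k) (hprob : ∀ t, ∑ k, μ t k = 1)
    (hderiv : ∀ k, HasDerivAt (fun t => μ t k) (μ' k) t₀)
    (A : Set (Fin n → Fin r))
    (hA : ∀ x y : Fin n → Fin r, x ≤ y → x ∈ A → y ∈ A)
    (Sstar : ℝ) (h0 : 0 ≤ Sstar)
    (hSstar : ∀ k : Fin r, 1 ≤ k.1 →
      Sstar ≤ ∑ l ∈ Finset.univ.filter (fun l : Fin r => k ≤ l), μ' l) :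
    Sstar * ∑ j : Fin n, ∑ x : Fin n → Fin r,
        (A.indicator (fun _ => (1 : ℝ)) (Function.update x j ⟨r - 1, by omega⟩)
          - A.indicator (fun _ => (1 : ℝ)) (Function.update x j ⟨0, by omega⟩))
          * ∏ j' : Fin n, μ t₀ (x j')
      ≤ deriv (fun t => ∑ x : Fin n → Fin r,
          A.indicator (fun _ => (1 : ℝ)) x * ∏ j' : Fin n, μ t (x j')) t₀ := by
  classical
  set f : (Fin n → Fin r) → ℝ := A.indicator (fun _ => (1 : ℝ)) with hfdef
  have hf0 : ∀ x : Fin n → Fin r, 0 ≤ f x :=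
    fun x => Set.indicator_nonneg (fun _ _ => zero_le_one) x
  have hfmono : ∀ x y : Fin n → Fin r, x ≤ y → f x ≤ f y := by
    intro x y hxy
    by_cases hx : x ∈ A
    · have hy := hA x y hxy hx
      simp [hfdef, Set.indicator_of_mem, hx, hy]
    · rw [hfdef, Set.indicator_of_notMem hx]
      exact hf0 y
  -- the derivative of each product
  have hprod : ∀ x : Fin n → Fin r, HasDerivAt (fun t => ∏ j' : Fin n, μ t (x j'))
      (∑ j : Fin n, (∏ j' ∈ Finset.univ.erase j, μ t₀ (x j')) * μ' (x j)) t₀ := by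
    intro x
    simpa only [smul_eq_mul] using
      (HasDerivAt.fun_finsetProd (u := Finset.univ) (f := fun j' t => μ t (x j'))
        (f' := fun j' => μ' (x j')) (x := t₀) (fun j' _ => hderiv (x j')))
  have hG : HasDerivAt (fun t => ∑ x : Fin n → Fin r, f x * ∏ j' : Fin n, μ t (x j'))
      (∑ x : Fin n → Fin r, f x * ∑ j : Fin n,
        (∏ j' ∈ Finset.univ.erase j, μ t₀ (x j')) * μ' (x j)) t₀ :=
    HasDerivAt.fun_sum fun x _ => (hprod x).const_mul (f x)
  rw [hG.deriv]
  -- the derivatives μ' sum to zero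
  have hsum0 : ∑ k, μ' k = 0 := by
    have h1 : HasDerivAt (fun t => ∑ k, μ t k) (∑ k, μ' k) t₀ :=
      HasDerivAt.fun_sum fun k _ => hderiv k
    have h2 : HasDerivAt (fun t => ∑ k, μ t k) 0 t₀ := by
      have he : (fun t => ∑ k, μ t k) = fun _ => (1 : ℝ) := funext hprob
      rw [he]; exact hasDerivAt_const _ _
    exact h1.unique h2
  have hswap : (∑ x : Fin n → Fin r, f x * ∑ j : Fin n,
        (∏ j' ∈ Finset.univ.erase j, μ t₀ (x j')) * μ' (x j))
      = ∑ j : Fin n, ∑ x : Fin n → Fin r,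
          f x * ((∏ j' ∈ Finset.univ.erase j, μ t₀ (x j')) * μ' (x j)) := by
    simp_rw [Finset.mul_sum]
    exact Finset.sum_comm
  rw [hswap, Finset.mul_sum]
  apply Finset.sum_le_sum
  intro j _
  -- notation for this coordinate
  set z : Fin r := ⟨0, by omega⟩ with hzdef
  set top : Fin r := ⟨r - 1, by omega⟩ with htopdef
  set P : (Fin n → Fin r) → ℝ := fun x => ∏ j' ∈ Finset.univ.erase j, μ t₀ (x j') with hPdef
  have hPupd : ∀ (x : Fin n → Fin r) (k : Fin r), P (Function.update x j k) = P x := by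
    intro x k
    apply Finset.prod_congr rfl
    intro j' hj'
    rw [Function.update_of_ne (Finset.ne_of_mem_erase hj')]
  have hP0 : ∀ x, 0 ≤ P x := fun x => Finset.prod_nonneg fun j' _ => hpos t₀ (x j')
  set B : Fin r → ℝ := fun k =>
    ∑ x ∈ Finset.univ.filter (fun x : Fin n → Fin r => x j = z),
      f (Function.update x j k) * P x with hBdef
  have hGinv : ∀ k : Fin r, ∀ (x : Fin n → Fin r) (m : Fin r),
      f (Function.update (Function.update x j m) j k) * P (Function.update x j m)
        = f (Function.update x j k) * P x := by
    intro k x m; rw [Function.update_idem, hPupd]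
  -- transport of fibers: the fiber sums of `f (update · j k) * P` do not depend on the fiber
  have hfiberB : ∀ (k v : Fin r),
      (∑ x ∈ Finset.univ.filter (fun x : Fin n → Fin r => x j = v),
        f (Function.update x j k) * P x) = B k := by
    intro k v
    exact russo_fiber_transport j (fun x => f (Function.update x j k) * P x) (hGinv k) v z
  -- full-space weighted sums equal B
  have hCB : ∀ c : Fin r,
      (∑ x : Fin n → Fin r, f (Function.update x j c) * ∏ j' : Fin n, μ t₀ (x j')) = B c := by
    intro c
    have hsplit : ∀ x : Fin n → Fin r,
        (∏ j' : Fin n, μ t₀ (x j')) = μ t₀ (x j) * P x := by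
      intro x
      rw [hPdef]
      exact (Finset.mul_prod_erase Finset.univ _ (Finset.mem_univ j)).symm
    calc (∑ x : Fin n → Fin r, f (Function.update x j c) * ∏ j' : Fin n, μ t₀ (x j'))
        = ∑ v : Fin r, ∑ x ∈ Finset.univ.filter (fun x : Fin n → Fin r => x j = v),
            f (Function.update x j c) * (μ t₀ (x j) * P x) := by
          simp_rw [hsplit]
          rw [Finset.sum_fiberwise_of_maps_to (fun x _ => Finset.mem_univ (x j))]
      _ = ∑ v : Fin r, μ t₀ v * ∑ x ∈ Finset.univ.filter (fun x : Fin n → Fin r => x j = v),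
            f (Function.update x j c) * P x := by
          apply Finset.sum_congr rfl
          intro v _
          rw [Finset.mul_sum]
          apply Finset.sum_congr rfl
          intro x hx
          rw [Finset.mem_filter] at hx
          rw [hx.2]; ring
      _ = ∑ v : Fin r, μ t₀ v * B c := by
          apply Finset.sum_congr rfl
          intro v _
          rw [hfiberB c v]
      _ = B c := by rw [← Finset.sum_mul, hprob t₀, one_mul]
  -- the j-th summand of the derivative equals ∑ k, B k * μ' k
  have hRHS : (∑ x : Fin n → Fin r,
        f x * ((∏ j' ∈ Finset.univ.erase j, μ t₀ (x j')) * μ' (x j)))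
      = ∑ k : Fin r, B k * μ' k := by
    calc (∑ x : Fin n → Fin r, f x * (P x * μ' (x j)))
        = ∑ v : Fin r, ∑ x ∈ Finset.univ.filter (fun x : Fin n → Fin r => x j = v),
            f x * (P x * μ' (x j)) :=
          (Finset.sum_fiberwise_of_maps_to (fun x _ => Finset.mem_univ (x j)) _).symm
      _ = ∑ v : Fin r, B v * μ' v := by
          apply Finset.sum_congr rfl
          intro v _
          rw [← hfiberB v v, Finset.sum_mul]
          apply Finset.sum_congr rfl
          intro x hx
          rw [Finset.mem_filter] at hx
          have hxu : Function.update x j v = x := by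
            rw [← hx.2]; exact Function.update_eq_self j x
          rw [hxu, hx.2]
          ring
  -- monotonicity of B
  have hBmono : ∀ k k' : Fin r, k ≤ k' → B k ≤ B k' := by
    intro k k' hk
    apply Finset.sum_le_sum
    intro x _
    apply mul_le_mul_of_nonneg_right _ (hP0 x)
    apply hfmono
    intro i
    by_cases hij : i = j
    · subst hij; simp [Function.update_self, hk]
    · rw [Function.update_of_ne hij, Function.update_of_ne hij]
  -- Abel summation
  have habel : Sstar * (B top - B z) ≤ ∑ k : Fin r, B k * μ' k := by
    set a : ℕ → ℝ := fun m => if h : m < r then μ' ⟨m, h⟩ else 0 with hadef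
    set b : ℕ → ℝ := fun m => if h : m < r then B ⟨m, h⟩ else 0 with hbdef
    have hfa : ∀ k : Fin r, a k.1 = μ' k := by
      intro k; rw [hadef]; simp [k.isLt]
    have hfb : ∀ k : Fin r, b k.1 = B k := by
      intro k; rw [hbdef]; simp [k.isLt]
    have ha0 : ∑ i ∈ Finset.range r, a i = 0 := by
      rw [← Fin.sum_univ_eq_sum_range a r, ← hsum0]
      exact Finset.sum_congr rfl fun k _ => hfa k
    have hbm : ∀ i, i + 1 < r → b i ≤ b (i + 1) := by
      intro i hi
      have h1 : i < r := by omega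
      rw [hbdef]; simp only [dif_pos hi, dif_pos h1]
      exact hBmono _ _ (by simp [Fin.mk_le_mk])
    have hT : ∀ m, 1 ≤ m → m < r → Sstar ≤ ∑ i ∈ Finset.Ico m r, a i := by
      intro m hm1 hmr
      have hIco : Finset.Ico m r = (Finset.range r).filter (fun i => m ≤ i) := by
        ext i
        simp only [Finset.mem_Ico, Finset.mem_filter, Finset.mem_range]
        omega
      have hkey : (∑ i ∈ Finset.Ico m r, a i)
          = ∑ l ∈ Finset.univ.filter (fun l : Fin r => (⟨m, hmr⟩ : Fin r) ≤ l), μ' l := by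
        rw [hIco, Finset.sum_filter, Finset.sum_filter,
          ← Fin.sum_univ_eq_sum_range (fun i => if m ≤ i then a i else 0) r]
        apply Finset.sum_congr rfl
        intro k _
        by_cases hmk : m ≤ k.1 <;> simp [hmk, Fin.le_def, hfa k]
      rw [hkey]
      exact hSstar ⟨m, hmr⟩ hm1
    have := russo_abel r (by omega) a b Sstar ha0 hbm hT
    have hb1 : b (r - 1) = B top := by
      rw [hbdef]; simp only [htopdef]; rw [dif_pos (by omega : r - 1 < r)]
    have hb0 : b 0 = B z := by
      rw [hbdef]; simp only [hzdef]; rw [dif_pos (by omega : 0 < r)]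
    have hsum : ∑ i ∈ Finset.range r, b i * a i = ∑ k : Fin r, B k * μ' k := by
      rw [← Fin.sum_univ_eq_sum_range (fun i => b i * a i) r]
      exact Finset.sum_congr rfl fun k _ => by rw [hfa k, hfb k]
    rw [hb1, hb0, hsum] at this
    exact this
  -- put everything together
  have hLHS : (∑ x : Fin n → Fin r,
        (f (Function.update x j top) - f (Function.update x j z)) * ∏ j' : Fin n, μ t₀ (x j'))
      = B top - B z := by
    simp_rw [sub_mul]
    rw [Finset.sum_sub_distrib, hCB top, hCB z]
  calc Sstar * ∑ x : Fin n → Fin r,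
        (f (Function.update x j ⟨r - 1, by omega⟩) - f (Function.update x j ⟨0, by omega⟩))
          * ∏ j' : Fin n, μ t₀ (x j')
      = Sstar * (B top - B z) := by rw [← hLHS]
    _ ≤ ∑ k : Fin r, B k * μ' k := habel
    _ = _ := hRHS.symm
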